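/- The function g(α) = -(1/π)·ln|cos(α)|/sin(α)² on (0, π) is a probability density: it is nonnegative and ∫₀^π g(α) dα = 1. -/

import Mathlib

open Real

noncomputable def Ffun (x : ℝ) : ℝ := Real.cos x * Real.log (Real.cos x) / Real.sin x + x

noncomputable def hfun (x : ℝ) : ℝ := -Real.log (Real.cos x) / Real.sin x ^ 2

lemma hfun_nonneg (x : ℝ) : 0 ≤ hfun x := by
  unfold hfun
  apply div_nonneg _ (sq_nonneg _)
  rw [neg_nonneg, ← Real.log_abs]
  exact Real.log_nonpos (abs_nonneg _) (Real.abs_cos_le_one x)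

lemma hasDerivAt_Ffun {x : ℝ} (hs : Real.sin x ≠ 0) (hc : Real.cos x ≠ 0) :
    HasDerivAt Ffun (hfun x) x := by
  have hlog : HasDerivAt (fun y => Real.log (Real.cos y)) ((Real.cos x)⁻¹ * (-Real.sin x)) x :=
    (Real.hasDerivAt_log hc).comp x (Real.hasDerivAt_cos x)
  have hnum : HasDerivAt (fun y => Real.cos y * Real.log (Real.cos y))
      (-Real.sin x * Real.log (Real.cos x) + Real.cos x * ((Real.cos x)⁻¹ * (-Real.sin x))) x :=
    (Real.hasDerivAt_cos x).mul hlog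
  have hdiv : HasDerivAt (fun y => Real.cos y * Real.log (Real.cos y) / Real.sin y)
      (((-Real.sin x * Real.log (Real.cos x) + Real.cos x * ((Real.cos x)⁻¹ * (-Real.sin x))) *
          Real.sin x - Real.cos x * Real.log (Real.cos x) * Real.cos x) / Real.sin x ^ 2) x :=
    hnum.div (Real.hasDerivAt_sin x) hs
  have h := hdiv.add (hasDerivAt_id x)
  have h' : HasDerivAt Ffun _ x := h
  convert h' using 1
  unfold hfun
  have hsc := Real.sin_sq_add_cos_sq x
  field_simp
  linear_combination (Real.log (Real.cos x)) * hsc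

lemma tendsto_aux {a : ℝ} (hc : Real.cos a ≠ 0) (hsa : Real.sin a = 0)
    (hl : Real.log (Real.cos a) = 0) :
    Filter.Tendsto (fun x => Real.log (Real.cos x) / Real.sin x) (nhdsWithin a {a}ᶜ) (nhds 0) := by
  have h1 : HasDerivAt (fun y => Real.log (Real.cos y)) 0 a := by
    have := (Real.hasDerivAt_log hc).comp a (Real.hasDerivAt_cos a)
    simpa [hsa, Function.comp_def] using this
  have h2 : HasDerivAt Real.sin (Real.cos a) a := Real.hasDerivAt_sin a
  rw [hasDerivAt_iff_tendsto_slope] at h1 h2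
  have key := h1.div h2 hc
  rw [zero_div] at key
  refine key.congr' ?_
  filter_upwards [self_mem_nhdsWithin] with x hx
  have hxa : x - a ≠ 0 := sub_ne_zero.mpr hx
  simp only [Pi.div_apply, slope_def_field, hl, hsa, sub_zero]
  rw [div_div_div_cancel_right₀ hxa]

lemma contF_at {x : ℝ} (hs : Real.sin x ≠ 0) : ContinuousAt Ffun x := by
  unfold Ffun
  exact (((Real.continuous_mul_log.comp Real.continuous_cos).continuousAt).div
    Real.continuous_sin.continuousAt hs).add continuousAt_id

lemma contF_within {a : ℝ} (hc : Real.cos a ≠ 0) (hsa : Real.sin a = 0)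
    (hl : Real.log (Real.cos a) = 0) (s : Set ℝ) : ContinuousWithinAt Ffun s a := by
  rw [← continuousWithinAt_diff_self]
  have key : Filter.Tendsto Ffun (nhdsWithin a {a}ᶜ) (nhds (Ffun a)) := by
    have h1 := ((Real.continuous_cos.tendsto a).mono_left nhdsWithin_le_nhds).mul
      (tendsto_aux hc hsa hl)
    have h2 : Filter.Tendsto (fun y : ℝ => y) (nhdsWithin a {a}ᶜ) (nhds a) :=
      Filter.tendsto_id.mono_left nhdsWithin_le_nhds
    have h3 := h1.add h2
    have e1 : Ffun a = a := by simp [Ffun, hsa]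
    have e2 : ∀ y, Real.cos y * (Real.log (Real.cos y) / Real.sin y) + y = Ffun y := by
      intro y; rw [Ffun, mul_div_assoc]
    rw [e1]
    simpa using (Filter.Tendsto.congr e2 h3)
  exact key.mono_left (nhdsWithin_mono a fun y hy => hy.2)

lemma contF_left : ContinuousOn Ffun (Set.Icc 0 (π / 2)) := by
  intro x hx
  rcases eq_or_ne x 0 with rfl | hne
  · exact contF_within (by simp) (by simp) (by simp) _
  · have hx0 : 0 < x := lt_of_le_of_ne hx.1 (Ne.symm hne)
    have hs : Real.sin x ≠ 0 :=
      ne_of_gt (Real.sin_pos_of_pos_of_lt_pi hx0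
        (lt_of_le_of_lt hx.2 (by linarith [Real.pi_pos])))
    exact (contF_at hs).continuousWithinAt

lemma contF_right : ContinuousOn Ffun (Set.Icc (π / 2) π) := by
  intro x hx
  rcases eq_or_ne x π with rfl | hne
  · exact contF_within (by simp) (by simp)
      (by rw [Real.cos_pi, Real.log_neg_eq_log, Real.log_one]) _
  · have hx0 : 0 < x := lt_of_lt_of_le (by positivity) hx.1
    have hs : Real.sin x ≠ 0 :=
      ne_of_gt (Real.sin_pos_of_pos_of_lt_pi hx0 (lt_of_le_of_ne hx.2 hne))
    exact (contF_at hs).continuousWithinAt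

lemma deriv_left : ∀ x ∈ Set.Ioo 0 (π / 2), HasDerivAt Ffun (hfun x) x := by
  intro x hx
  have hs : Real.sin x ≠ 0 :=
    ne_of_gt (Real.sin_pos_of_pos_of_lt_pi hx.1 (by linarith [hx.2, Real.pi_pos]))
  have hc : Real.cos x ≠ 0 :=
    ne_of_gt (Real.cos_pos_of_mem_Ioo ⟨by linarith [hx.1, Real.pi_pos], hx.2⟩)
  exact hasDerivAt_Ffun hs hc

lemma deriv_right : ∀ x ∈ Set.Ioo (π / 2) π, HasDerivAt Ffun (hfun x) x := by
  intro x hx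
  have hs : Real.sin x ≠ 0 :=
    ne_of_gt (Real.sin_pos_of_pos_of_lt_pi (by linarith [hx.1, Real.pi_pos]) hx.2)
  have hc : Real.cos x ≠ 0 :=
    ne_of_lt (Real.cos_neg_of_pi_div_two_lt_of_lt hx.1 (by linarith [hx.2, Real.pi_pos]))
  exact hasDerivAt_Ffun hs hc

lemma integral_hfun : ∫ x in (0:ℝ)..π, hfun x = π := by
  have hle1 : (0:ℝ) ≤ π / 2 := by positivity
  have hle2 : π / 2 ≤ π := by linarith [Real.pi_pos]
  have int1 : IntervalIntegrable hfun MeasureTheory.volume 0 (π / 2) := by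
    apply intervalIntegral.intervalIntegrable_deriv_of_nonneg (g := Ffun)
    · rw [Set.uIcc_of_le hle1]; exact contF_left
    · rw [min_eq_left hle1, max_eq_right hle1]; exact deriv_left
    · exact fun x _ => hfun_nonneg x
  have int2 : IntervalIntegrable hfun MeasureTheory.volume (π / 2) π := by
    apply intervalIntegral.intervalIntegrable_deriv_of_nonneg (g := Ffun)
    · rw [Set.uIcc_of_le hle2]; exact contF_right
    · rw [min_eq_left hle2, max_eq_right hle2]; exact deriv_right
    · exact fun x _ => hfun_nonneg x
  have v1 : ∫ x in (0:ℝ)..(π / 2), hfun x = Ffun (π / 2) - Ffun 0 :=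
    intervalIntegral.integral_eq_sub_of_hasDeriv_right_of_le hle1 contF_left
      (fun x hx => (deriv_left x hx).hasDerivWithinAt) int1
  have v2 : ∫ x in (π / 2:ℝ)..π, hfun x = Ffun π - Ffun (π / 2) :=
    intervalIntegral.integral_eq_sub_of_hasDeriv_right_of_le hle2 contF_right
      (fun x hx => (deriv_right x hx).hasDerivWithinAt) int2
  have htot := intervalIntegral.integral_add_adjacent_intervals int1 int2
  rw [v1, v2] at htot
  rw [← htot]
  have e0 : Ffun 0 = 0 := by simp [Ffun]
  have e1 : Ffun (π / 2) = π / 2 := by simp [Ffun]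
  have e2 : Ffun π = π := by simp [Ffun, Real.cos_pi, Real.log_neg_eq_log]
  rw [e0, e1, e2]; ring

theorem framing_square_density :
    (∀ α ∈ Set.Ioo (0 : ℝ) π,
        0 ≤ -(1 / π) * Real.log |Real.cos α| / Real.sin α ^ 2) ∧
    ∫ α in (0 : ℝ)..π, -(1 / π) * Real.log |Real.cos α| / Real.sin α ^ 2 = 1 := by
  have eq : ∀ α, -(1 / π) * Real.log |Real.cos α| / Real.sin α ^ 2 = (1 / π) * hfun α := by
    intro α
    simp only [hfun]
    rw [Real.log_abs]
    ring
  constructor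
  · intro α _
    rw [eq α]
    exact mul_nonneg (by positivity) (hfun_nonneg α)
  · simp_rw [eq]
    rw [intervalIntegral.integral_const_mul, integral_hfun, one_div,
      inv_mul_cancel₀ Real.pi_ne_zero]
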